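/- Let f : 2^D → ℝ be a normalized, monotone, submodular set function on a finite ground set D, let k ≥ 1, let S_0 = ∅, S_1, …, S_k be the greedy chain with budget k, and let S* be any subset with |S*| ≤ k maximizing f. Then the residuals R_t = f(S*) − f(S_t) satisfy R_{t+1} ≤ (1 − 1/k) R_t for each t, and hence f(S_k) ≥ (1 − (1 − 1/k)^k) · f(S*). -/

import Mathlib

open Finset

lemma greedy_aux_union
    {ι : Type*} [DecidableEq ι]
    (f : Finset ι → ℝ)
    (hsub : ∀ A B : Finset ι, A ⊆ B → ∀ x ∉ B,
      f (insert x B) - f B ≤ f (insert x A) - f A)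
    (A : Finset ι) (T : Finset ι) :
    f (A ∪ T) - f A ≤ ∑ x ∈ T, (f (insert x A) - f A) := by
  induction T using Finset.induction_on with
  | empty => simp
  | insert _ _ hx ih =>
    rename_i x T
    rw [Finset.sum_insert hx, Finset.union_insert]
    by_cases hxA : x ∈ A
    · have h1 : insert x (A ∪ T) = A ∪ T := by
        simp [Finset.insert_eq_self.2 (Finset.mem_union_left T hxA)]
      have h2 : insert x A = A := Finset.insert_eq_self.2 hxA
      rw [h1, h2]; linarith
    · have hxAT : x ∉ A ∪ T := by simp [hxA, hx]
      have := hsub A (A ∪ T) Finset.subset_union_left x hxAT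
      linarith

/-- Residual recursion for greedy selection: with residuals
`R_t = f(S*) − f(S_t)` along the greedy chain, `R_{t+1} ≤ (1 − 1/k) R_t` for each
`t < k`, and hence `f(S_k) ≥ (1 − (1 − 1/k)^k) · f(S*)`. -/
theorem greedy_residual_recursion
    {ι : Type*} [Fintype ι] [DecidableEq ι]
    (f : Finset ι → ℝ)
    (hnorm : f ∅ = 0)
    (hmono : ∀ A B : Finset ι, A ⊆ B → f A ≤ f B)
    (hsub : ∀ A B : Finset ι, A ⊆ B → ∀ x ∉ B,
      f (insert x B) - f B ≤ f (insert x A) - f A)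
    (k : ℕ) (hk : 1 ≤ k)
    (S : ℕ → Finset ι) (hS0 : S 0 = ∅)
    (hgreedy : ∀ t < k, ∃ x ∉ S t, S (t + 1) = insert x (S t) ∧
      ∀ y ∉ S t, f (insert y (S t)) - f (S t) ≤ f (insert x (S t)) - f (S t))
    (Sstar : Finset ι) (hcard : Sstar.card ≤ k)
    (hopt : ∀ T : Finset ι, T.card ≤ k → f T ≤ f Sstar) :
    (∀ t < k, f Sstar - f (S (t + 1)) ≤ (1 - 1 / (k : ℝ)) * (f Sstar - f (S t))) ∧
    f (S k) ≥ (1 - (1 - 1 / (k : ℝ)) ^ k) * f Sstar := by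
  have hk0 : (0:ℝ) < k := by positivity
  have hstep : ∀ t < k, f Sstar - f (S (t + 1)) ≤ (1 - 1 / (k : ℝ)) * (f Sstar - f (S t)) := by
    intro t ht
    obtain ⟨x, hx, hSt1, hmax⟩ := hgreedy t ht
    set δ : ℝ := f (insert x (S t)) - f (S t) with hδ
    have hδ0 : 0 ≤ δ := by
      have := hmono (S t) (insert x (S t)) (Finset.subset_insert x (S t))
      linarith
    -- key inequality : f Sstar - f (S t) ≤ k * δ
    have hkey : f Sstar - f (S t) ≤ (k : ℝ) * δ := by
      have h1 : f Sstar ≤ f (S t ∪ Sstar) :=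
        hmono _ _ Finset.subset_union_right
      have h2 := greedy_aux_union f hsub (S t) Sstar
      have h3 : ∑ y ∈ Sstar, (f (insert y (S t)) - f (S t)) ≤ ∑ _y ∈ Sstar, δ := by
        apply Finset.sum_le_sum
        intro y hy
        by_cases hyS : y ∈ S t
        · simp [Finset.insert_eq_self.2 hyS, hδ0]
        · exact hmax y hyS
      have h4 : ∑ _y ∈ Sstar, δ = (Sstar.card : ℝ) * δ := by
        simp [Finset.sum_const, nsmul_eq_mul]
      have h5 : (Sstar.card : ℝ) * δ ≤ (k : ℝ) * δ := by
        apply mul_le_mul_of_nonneg_right _ hδ0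
        exact_mod_cast hcard
      linarith
    have hfS1 : f (S (t + 1)) = f (S t) + δ := by rw [hSt1, hδ]; ring
    have : δ ≥ (f Sstar - f (S t)) / k := by
      rw [ge_iff_le, div_le_iff₀ hk0]; linarith
    have h6 : f Sstar - f (S (t+1)) = (f Sstar - f (S t)) - δ := by rw [hfS1]; ring
    rw [h6]
    have : (f Sstar - f (S t)) - δ ≤ (f Sstar - f (S t)) - (f Sstar - f (S t)) / k := by linarith
    calc (f Sstar - f (S t)) - δ ≤ (f Sstar - f (S t)) - (f Sstar - f (S t)) / k := this
      _ = (1 - 1 / (k:ℝ)) * (f Sstar - f (S t)) := by field_simp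
  refine ⟨hstep, ?_⟩
  have hfs0 : 0 ≤ f Sstar := by
    have := hmono ∅ Sstar (Finset.empty_subset _); linarith
  have hq0 : (0:ℝ) ≤ 1 - 1 / k := by
    rw [sub_nonneg, div_le_one hk0]; exact_mod_cast hk
  have hiter : ∀ t ≤ k, f Sstar - f (S t) ≤ (1 - 1 / (k:ℝ)) ^ t * f Sstar := by
    intro t
    induction t with
    | zero => intro _; simp [hS0, hnorm]
    | succ n ih =>
      intro hn
      have hnk : n < k := hn
      have h1 := hstep n hnk
      have h2 := ih (Nat.le_of_lt hnk)
      calc f Sstar - f (S (n+1)) ≤ (1 - 1 / (k:ℝ)) * (f Sstar - f (S n)) := h1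
        _ ≤ (1 - 1 / (k:ℝ)) * ((1 - 1 / (k:ℝ)) ^ n * f Sstar) :=
            mul_le_mul_of_nonneg_left h2 hq0
        _ = (1 - 1 / (k:ℝ)) ^ (n+1) * f Sstar := by ring
  have := hiter k le_rfl
  linarith
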